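/- Shifting an HTO by a constant via an auxiliary two-level system: consider a realization setup (A, B, H_B, b, U) with heat transfer operator Q. Let Δ : ℝ, C = Fin 2, H_C = Matrix.diagonal ![((Δ/2 : ℝ) : ℂ), ((-Δ/2 : ℝ) : ℂ)], σ_x = !![0, 1; 1, 0], and H_BC = H_B ⊗ₖ 1 + 1 ⊗ₖ H_C on B × C. Let Ṽ be the matrix on A × (B × C) obtained from U ⊗ₖ σ_x via the natural reindexing (A × B) × C ≃ A × (B × C). Then: (a) the Gibbs state of H_BC at inverse temperature b equals ρ_B ⊗ₖ ρ_C, where ρ_C is the Gibbs state of H_C at inverse temperature b; (b) Ṽᴴ * Ṽ = 1; (c) for every density matrix ρ on A, tr_{B×C} (Ṽ * (ρ ⊗ₖ (ρ_B ⊗ₖ ρ_C)) * Ṽᴴ) = tr_B (U * (ρ ⊗ₖ ρ_B) * Uᴴ); and (d) the heat transfer operator of the realization setup (A, B × C, H_BC, b, Ṽ) equals Q + ((Δ * Real.tanh (b * Δ / 2) : ℝ) : ℂ) • (1 : Matrix A A ℂ). -/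

import Mathlib

open Matrix Kronecker
open scoped ComplexOrder

noncomputable section

/-- A density matrix: positive semidefinite with trace 1. -/
def IsDensityMatrix {ι : Type*} [Fintype ι] (ρ : Matrix ι ι ℂ) : Prop :=
  ρ.PosSemidef ∧ ρ.trace = 1

/-- The matrix exponential. -/
noncomputable def mexp {ι : Type*} [Fintype ι] [DecidableEq ι] (M : Matrix ι ι ℂ) :
    Matrix ι ι ℂ :=
  NormedSpace.exp M

/-- Von Neumann entropy of a (Hermitian) matrix, via its eigenvalues. -/
noncomputable def vnEntropy {ι : Type*} [Fintype ι] [DecidableEq ι] (ρ : Matrix ι ι ℂ) : ℝ :=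
  if h : ρ.IsHermitian then -∑ i, h.eigenvalues i * Real.log (h.eigenvalues i) else 0

/-- The Gibbs state of the Hamiltonian `H` at inverse temperature `b`. -/
noncomputable def gibbs {ι : Type*} [Fintype ι] [DecidableEq ι] (H : Matrix ι ι ℂ) (b : ℝ) :
    Matrix ι ι ℂ :=
  (Matrix.trace (mexp (-b • H)))⁻¹ • mexp (-b • H)

/-- Equilibrium energy of the bath. -/
noncomputable def eqEnergy {ι : Type*} [Fintype ι] [DecidableEq ι] (H : Matrix ι ι ℂ) (b : ℝ) : ℝ :=
  (Matrix.trace (gibbs H b * H)).re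

/-- Partial trace over the second (bath) factor. -/
def ptraceB {A B : Type*} [Fintype B] (M : Matrix (A × B) (A × B) ℂ) : Matrix A A ℂ :=
  Matrix.of fun a a' => ∑ k : B, M (a, k) (a', k)

/-- Partial trace over the first (device) factor. -/
def ptraceA {A B : Type*} [Fintype A] (M : Matrix (A × B) (A × B) ℂ) : Matrix B B ℂ :=
  Matrix.of fun k k' => ∑ a : A, M (a, k) (a, k')

/-- The heat transfer operator of a realization setup. -/
noncomputable def hto {A B : Type*} [Fintype A] [DecidableEq A] [Fintype B] [DecidableEq B]
    (H_B : Matrix B B ℂ) (b : ℝ) (U : Matrix (A × B) (A × B) ℂ) : Matrix A A ℂ :=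
  ptraceB (((1 : Matrix A A ℂ) ⊗ₖ gibbs H_B b) * Uᴴ * ((1 : Matrix A A ℂ) ⊗ₖ H_B) * U)
    - eqEnergy H_B b • (1 : Matrix A A ℂ)

/-- Matrix logarithm of a Hermitian matrix through the continuous functional calculus. -/
noncomputable def mlog {ι : Type*} [Fintype ι] [DecidableEq ι] (ρ : Matrix ι ι ℂ) :
    Matrix ι ι ℂ :=
  if h : ρ.IsHermitian then h.cfc Real.log else 0

/-- Quantum relative entropy `S(σ‖ρ)`. -/
noncomputable def relEntropy {ι : Type*} [Fintype ι] [DecidableEq ι] (σ ρ : Matrix ι ι ℂ) : ℝ :=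
  (Matrix.trace (σ * (mlog σ - mlog ρ))).re

end

section Helpers

open NormedSpace

variable {ι κ : Type*} [Fintype ι] [DecidableEq ι] [Fintype κ] [DecidableEq κ]

lemma mexp_algHom (φ : Matrix ι ι ℂ →ₐ[ℂ] Matrix κ κ ℂ) (M : Matrix ι ι ℂ) :
    φ (mexp M) = mexp (φ M) := by
  letI : SeminormedRing (Matrix ι ι ℂ) := Matrix.linftyOpSemiNormedRing
  letI : NormedRing (Matrix ι ι ℂ) := Matrix.linftyOpNormedRing
  letI : NormedAlgebra ℂ (Matrix ι ι ℂ) := Matrix.linftyOpNormedAlgebra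
  letI : SeminormedRing (Matrix κ κ ℂ) := Matrix.linftyOpSemiNormedRing
  letI : NormedRing (Matrix κ κ ℂ) := Matrix.linftyOpNormedRing
  letI : NormedAlgebra ℂ (Matrix κ κ ℂ) := Matrix.linftyOpNormedAlgebra
  letI : NormedAlgebra ℚ (Matrix ι ι ℂ) := Matrix.linftyOpNormedAlgebra
  letI : NormedAlgebra ℚ (Matrix κ κ ℂ) := Matrix.linftyOpNormedAlgebra
  exact map_exp φ (φ.toLinearMap.continuous_of_finiteDimensional) M

/-- `· ⊗ₖ 1` as an algebra hom. -/
def kronAlgHomL (ι κ : Type*) [Fintype ι] [DecidableEq ι] [Fintype κ] [DecidableEq κ] :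
    Matrix ι ι ℂ →ₐ[ℂ] Matrix (ι × κ) (ι × κ) ℂ :=
  AlgHom.ofLinearMap
    { toFun := fun M => M ⊗ₖ (1 : Matrix κ κ ℂ)
      map_add' := fun M N => Matrix.add_kronecker M N 1
      map_smul' := fun c M => by simp [Matrix.smul_kronecker] }
    Matrix.one_kronecker_one
    (fun M N => by
      show (M * N) ⊗ₖ (1 : Matrix κ κ ℂ) = (M ⊗ₖ 1) * (N ⊗ₖ 1)
      rw [← Matrix.mul_kronecker_mul, Matrix.one_mul])

/-- `1 ⊗ₖ ·` as an algebra hom. -/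
def kronAlgHomR (ι κ : Type*) [Fintype ι] [DecidableEq ι] [Fintype κ] [DecidableEq κ] :
    Matrix κ κ ℂ →ₐ[ℂ] Matrix (ι × κ) (ι × κ) ℂ :=
  AlgHom.ofLinearMap
    { toFun := fun M => (1 : Matrix ι ι ℂ) ⊗ₖ M
      map_add' := fun M N => Matrix.kronecker_add 1 M N
      map_smul' := fun c M => by simp [Matrix.kronecker_smul] }
    Matrix.one_kronecker_one
    (fun M N => by
      show (1 : Matrix ι ι ℂ) ⊗ₖ (M * N) = (1 ⊗ₖ M) * (1 ⊗ₖ N)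
      rw [← Matrix.mul_kronecker_mul, Matrix.one_mul])

lemma mexp_kron_sum (X : Matrix ι ι ℂ) (Y : Matrix κ κ ℂ) :
    mexp (X ⊗ₖ (1 : Matrix κ κ ℂ) + (1 : Matrix ι ι ℂ) ⊗ₖ Y) = mexp X ⊗ₖ mexp Y := by
  have h1 : mexp (X ⊗ₖ (1 : Matrix κ κ ℂ)) = mexp X ⊗ₖ (1 : Matrix κ κ ℂ) :=
    (mexp_algHom (kronAlgHomL ι κ) X).symm
  have h2 : mexp ((1 : Matrix ι ι ℂ) ⊗ₖ Y) = (1 : Matrix ι ι ℂ) ⊗ₖ mexp Y :=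
    (mexp_algHom (kronAlgHomR ι κ) Y).symm
  have hc : Commute (X ⊗ₖ (1 : Matrix κ κ ℂ)) ((1 : Matrix ι ι ℂ) ⊗ₖ Y) := by
    unfold Commute SemiconjBy
    rw [← Matrix.mul_kronecker_mul, ← Matrix.mul_kronecker_mul, Matrix.one_mul, Matrix.mul_one,
      Matrix.one_mul, Matrix.mul_one]
  calc mexp (X ⊗ₖ (1 : Matrix κ κ ℂ) + (1 : Matrix ι ι ℂ) ⊗ₖ Y)
      = mexp (X ⊗ₖ (1 : Matrix κ κ ℂ)) * mexp ((1 : Matrix ι ι ℂ) ⊗ₖ Y) :=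
        Matrix.exp_add_of_commute _ _ hc
    _ = (mexp X * 1) ⊗ₖ (1 * mexp Y) := by
        rw [h1, h2, ← Matrix.mul_kronecker_mul]
    _ = mexp X ⊗ₖ mexp Y := by rw [Matrix.mul_one, Matrix.one_mul]

lemma mexp_diagonal (v : ι → ℂ) :
    mexp (Matrix.diagonal v) = Matrix.diagonal fun i => Complex.exp (v i) := by
  unfold mexp
  have hv : NormedSpace.exp v = fun i => Complex.exp (v i) := by
    funext i
    rw [Pi.coe_exp, Complex.exp_eq_exp_ℂ]
  rw [Matrix.exp_diagonal, hv]

lemma trace_mexp_hermitian {M : Matrix ι ι ℂ} (hM : M.IsHermitian) :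
    Matrix.trace (mexp M) = ((∑ i, Real.exp (hM.eigenvalues i) : ℝ) : ℂ) := by
  set W : Matrix ι ι ℂ := (hM.eigenvectorUnitary : Matrix ι ι ℂ)
  have hW : star W * W = 1 := (Unitary.mem_iff.mp hM.eigenvectorUnitary.2).1
  have hW' : W * star W = 1 := (Unitary.mem_iff.mp hM.eigenvectorUnitary.2).2
  have hinv : W⁻¹ = star W := Matrix.inv_eq_left_inv hW
  have hUnit : IsUnit W := ⟨⟨W, star W, hW', hW⟩, rfl⟩
  have h1 : mexp M = W * mexp (Matrix.diagonal (RCLike.ofReal ∘ hM.eigenvalues)) * W⁻¹ := by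
    conv_lhs => rw [show M = W * Matrix.diagonal (RCLike.ofReal ∘ hM.eigenvalues) * star W from
      hM.spectral_theorem]
    rw [← hinv]
    exact Matrix.exp_conj W _ hUnit
  rw [h1, Matrix.trace_mul_cycle, hinv, hW, Matrix.one_mul,
    mexp_diagonal, Matrix.trace_diagonal]
  push_cast
  exact Finset.sum_congr rfl fun i _ => rfl

lemma trace_mexp_pos {M : Matrix ι ι ℂ} [Nonempty ι] (hM : M.IsHermitian) :
    ∃ r : ℝ, 0 < r ∧ Matrix.trace (mexp M) = (r : ℂ) :=
  ⟨_, Finset.sum_pos (fun i _ => Real.exp_pos _) Finset.univ_nonempty, trace_mexp_hermitian hM⟩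

lemma isHermitian_real_smul {M : Matrix ι ι ℂ} (hM : M.IsHermitian) (r : ℝ) :
    (r • M).IsHermitian := by
  ext i j
  have := hM.apply i j
  simp only [Matrix.conjTranspose_apply, Matrix.smul_apply, star_smul, star_trivial, this]

lemma trace_gibbs_one {H : Matrix ι ι ℂ} [Nonempty ι] (hH : H.IsHermitian) (b : ℝ) :
    Matrix.trace (gibbs H b) = 1 := by
  obtain ⟨r, hr, htr⟩ := trace_mexp_pos (isHermitian_real_smul hH (-b))
  unfold gibbs
  rw [Matrix.trace_smul, htr, smul_eq_mul, inv_mul_cancel₀]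
  exact_mod_cast hr.ne'

lemma ptraceB_kron {A B : Type*} [Fintype A] [Fintype B]
    (X : Matrix A A ℂ) (Y : Matrix B B ℂ) :
    ptraceB (X ⊗ₖ Y) = Y.trace • X := by
  ext a a'
  simp only [ptraceB, Matrix.of_apply, Matrix.kroneckerMap_apply, Matrix.smul_apply,
    Matrix.trace, Matrix.diag, smul_eq_mul]
  rw [Finset.sum_mul]
  exact Finset.sum_congr rfl fun k _ => mul_comm _ _

lemma ptraceB_add {A B : Type*} [Fintype B] (P Q : Matrix (A × B) (A × B) ℂ) :
    ptraceB (P + Q) = ptraceB P + ptraceB Q := by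
  ext a a'
  simp [ptraceB, Finset.sum_add_distrib]

lemma ptraceB_reindex_kron {A B C : Type*} [Fintype A] [Fintype B] [Fintype C]
    (M : Matrix (A × B) (A × B) ℂ) (N : Matrix C C ℂ) :
    ptraceB (Matrix.reindex (Equiv.prodAssoc A B C) (Equiv.prodAssoc A B C) (M ⊗ₖ N))
      = N.trace • ptraceB M := by
  ext a a'
  simp only [ptraceB, Matrix.reindex_apply, Matrix.submatrix_apply, Matrix.of_apply,
    Matrix.smul_apply, Matrix.trace, Matrix.diag, smul_eq_mul]
  rw [Fintype.sum_prod_type]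
  rw [Finset.sum_comm, Finset.sum_mul]
  refine Finset.sum_congr rfl fun c _ => ?_
  rw [Finset.mul_sum]
  refine Finset.sum_congr rfl fun k _ => ?_
  simp [Equiv.prodAssoc, Matrix.kroneckerMap_apply, mul_comm]

lemma real_smul_mat {A : Type*} (r : ℝ) (M : Matrix A A ℂ) :
    r • M = (r : ℂ) • M := by
  ext i j
  simp [Matrix.smul_apply, Complex.real_smul]

end Helpers

lemma kron_conjTranspose {a b c d : Type*} (X : Matrix a b ℂ) (Y : Matrix c d ℂ) :
    (X ⊗ₖ Y)ᴴ = Xᴴ ⊗ₖ Yᴴ := by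
  ext i j
  simp [Matrix.conjTranspose_apply, Matrix.kroneckerMap_apply, mul_comm]


/-- Shifting an HTO by a constant via an auxiliary two-level system. -/
theorem hto_shift_by_constant
    {A B : Type*} [Fintype A] [DecidableEq A] [Nonempty A]
    [Fintype B] [DecidableEq B] [Nonempty B]
    (H_B : Matrix B B ℂ) (hH : H_B.IsHermitian) {b : ℝ} (hb : 0 < b)
    (U : Matrix (A × B) (A × B) ℂ) (hU : Uᴴ * U = 1)
    (Δ : ℝ)
    (H_C : Matrix (Fin 2) (Fin 2) ℂ)
    (hHC : H_C = Matrix.diagonal ![((Δ / 2 : ℝ) : ℂ), ((-Δ / 2 : ℝ) : ℂ)])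
    (σx : Matrix (Fin 2) (Fin 2) ℂ) (hσx : σx = !![0, 1; 1, 0])
    (H_BC : Matrix (B × Fin 2) (B × Fin 2) ℂ)
    (hHBC : H_BC = H_B ⊗ₖ (1 : Matrix (Fin 2) (Fin 2) ℂ) + (1 : Matrix B B ℂ) ⊗ₖ H_C)
    (V : Matrix (A × B × Fin 2) (A × B × Fin 2) ℂ)
    (hV : V = Matrix.reindex (Equiv.prodAssoc A B (Fin 2)) (Equiv.prodAssoc A B (Fin 2))
      (U ⊗ₖ σx)) :
    gibbs H_BC b = gibbs H_B b ⊗ₖ gibbs H_C b ∧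
    Vᴴ * V = 1 ∧
    (∀ ρ : Matrix A A ℂ, IsDensityMatrix ρ →
      ptraceB (V * (ρ ⊗ₖ (gibbs H_B b ⊗ₖ gibbs H_C b)) * Vᴴ) =
        ptraceB (U * (ρ ⊗ₖ gibbs H_B b) * Uᴴ)) ∧
    hto H_BC b V = hto H_B b U
      + ((Δ * Real.tanh (b * Δ / 2) : ℝ) : ℂ) • (1 : Matrix A A ℂ) := by
  have hHCherm : H_C.IsHermitian := by
    rw [hHC]
    refine Matrix.isHermitian_diagonal_of_self_adjoint _ ?_
    ext i
    fin_cases i <;> simp [_root_.IsSelfAdjoint]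
  -- part (a)
  have hbHBC : (-b) • H_BC
      = ((-b) • H_B) ⊗ₖ (1 : Matrix (Fin 2) (Fin 2) ℂ)
        + (1 : Matrix B B ℂ) ⊗ₖ ((-b) • H_C) := by
    rw [hHBC, smul_add, Matrix.smul_kronecker, Matrix.kronecker_smul]
  have key : mexp ((-b) • H_BC) = mexp ((-b) • H_B) ⊗ₖ mexp ((-b) • H_C) := by
    rw [hbHBC]; exact mexp_kron_sum _ _
  obtain ⟨rB, hrB, htrB⟩ := trace_mexp_pos (ι := B) (isHermitian_real_smul hH (-b))
  have parta : gibbs H_BC b = gibbs H_B b ⊗ₖ gibbs H_C b := by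
    unfold gibbs
    rw [key, Matrix.trace_kronecker, mul_inv, mul_smul, ← Matrix.kronecker_smul,
      ← Matrix.smul_kronecker]
  -- basic facts about σx and the auxiliary system
  have hσxH : σxᴴ = σx := by
    rw [hσx]; ext i j; fin_cases i <;> fin_cases j <;> simp
  have hσx2 : σx * σx = 1 := by
    rw [hσx, Matrix.one_fin_two]
    norm_num [Matrix.mul_fin_two]
  set x : ℝ := b * Δ / 2 with hx
  have hEC : mexp ((-b) • H_C)
      = Matrix.diagonal ![(Real.exp (-x) : ℂ), (Real.exp x : ℂ)] := by
    rw [hHC, ← Matrix.diagonal_smul, mexp_diagonal]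
    refine congrArg Matrix.diagonal (funext fun i => ?_)
    fin_cases i <;>
      simp [Complex.real_smul, ← Complex.ofReal_exp] <;>
      (try congr 1) <;> (push_cast [hx]; try ring)
  set ZC : ℝ := Real.exp (-x) + Real.exp x with hZC
  have hZCpos : 0 < ZC := by positivity
  have htrC : Matrix.trace (mexp ((-b) • H_C)) = (ZC : ℂ) := by
    rw [hEC, Matrix.trace_diagonal, Fin.sum_univ_two]
    simp only [Matrix.cons_val_zero, Matrix.cons_val_one, Matrix.head_cons, hZC]
    push_cast
    ring
  have hρCeq : gibbs H_C b = ((ZC : ℂ))⁻¹ •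
      Matrix.diagonal ![(Real.exp (-x) : ℂ), (Real.exp x : ℂ)] := by
    unfold gibbs
    rw [htrC, hEC]
  have htrρC : Matrix.trace (gibbs H_C b) = 1 := trace_gibbs_one hHCherm b
  have htrρB : Matrix.trace (gibbs H_B b) = 1 := trace_gibbs_one hH b
  -- part (b)
  set Φ := Matrix.reindexAlgEquiv ℂ ℂ (Equiv.prodAssoc A B (Fin 2)) with hΦ
  have hV' : V = Φ (U ⊗ₖ σx) := by rw [hV, hΦ, Matrix.reindexAlgEquiv_apply]
  have hVH : Vᴴ = Φ (Uᴴ ⊗ₖ σx) := by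
    rw [hV, Matrix.conjTranspose_reindex, kron_conjTranspose, hσxH, hΦ,
      Matrix.reindexAlgEquiv_apply]
  have partb : Vᴴ * V = 1 := by
    rw [hVH, hV', ← _root_.map_mul Φ, ← Matrix.mul_kronecker_mul, hU, hσx2,
      Matrix.one_kronecker_one, _root_.map_one Φ]
  have hassoc : ∀ (X : Matrix A A ℂ) (Y : Matrix B B ℂ) (Z : Matrix (Fin 2) (Fin 2) ℂ),
      X ⊗ₖ (Y ⊗ₖ Z) = Φ ((X ⊗ₖ Y) ⊗ₖ Z) := by
    intro X Y Z
    rw [hΦ, Matrix.reindexAlgEquiv_apply, Matrix.kronecker_assoc]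
  -- part (c)
  have partc : ∀ ρ : Matrix A A ℂ, IsDensityMatrix ρ →
      ptraceB (V * (ρ ⊗ₖ (gibbs H_B b ⊗ₖ gibbs H_C b)) * Vᴴ) =
        ptraceB (U * (ρ ⊗ₖ gibbs H_B b) * Uᴴ) := by
    intro ρ _
    rw [hVH, hV', hassoc, ← _root_.map_mul Φ, ← _root_.map_mul Φ, ← Matrix.mul_kronecker_mul,
      ← Matrix.mul_kronecker_mul, hΦ, Matrix.reindexAlgEquiv_apply,
      ptraceB_reindex_kron, Matrix.trace_mul_cycle, hσx2,
      Matrix.one_mul, htrρC, one_smul]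
  refine ⟨parta, partb, partc, ?_⟩
  -- part (d)
  have hflip : σx * (H_C * σx) = -H_C := by
    rw [hσx, hHC]
    ext i j
    fin_cases i <;> fin_cases j <;>
      simp [Matrix.mul_apply, Fin.sum_univ_two, Matrix.diagonal_apply] <;>
      (push_cast; ring)
  set t : ℂ := Matrix.trace (gibbs H_C b * H_C) with ht
  set r : ℝ := -(Δ / 2) * Real.tanh x with hr
  have hreal : (ZC)⁻¹ * (Real.exp (-x) * (Δ / 2) + Real.exp x * (-Δ / 2)) = r := by
    have h1 : Real.exp (-x) + Real.exp x ≠ 0 := ne_of_gt hZCpos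
    have h2 : Real.cosh x ≠ 0 := ne_of_gt (Real.cosh_pos x)
    rw [hr, hZC, Real.tanh_eq_sinh_div_cosh, Real.sinh_eq, Real.cosh_eq]
    field_simp
    ring
  have htr : t = (r : ℂ) := by
    rw [ht, hρCeq, hHC, smul_mul_assoc, Matrix.trace_smul, Matrix.diagonal_mul_diagonal,
      Matrix.trace_diagonal, Fin.sum_univ_two]
    simp only [Pi.mul_apply, Matrix.cons_val_zero, Matrix.cons_val_one, Matrix.head_cons,
      smul_eq_mul]
    exact_mod_cast congrArg Complex.ofReal hreal
  have hEBC : eqEnergy H_BC b = eqEnergy H_B b + r := by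
    have h3 : Matrix.trace (gibbs H_BC b * H_BC)
        = Matrix.trace (gibbs H_B b * H_B) + t := by
      rw [parta, hHBC, Matrix.mul_add]
      simp only [← Matrix.mul_kronecker_mul, Matrix.mul_one, Matrix.one_mul,
        Matrix.trace_add, Matrix.trace_kronecker, htrρC, htrρB, mul_one, one_mul, ← ht]
    unfold eqEnergy
    rw [h3, htr, Complex.add_re, Complex.ofReal_re]
  set X₀ : Matrix (A × B) (A × B) ℂ :=
    ((1 : Matrix A A ℂ) ⊗ₖ gibbs H_B b) * Uᴴ * ((1 : Matrix A A ℂ) ⊗ₖ H_B) * U with hX₀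
  have hc1 : gibbs H_C b * σx * (1 : Matrix (Fin 2) (Fin 2) ℂ) * σx = gibbs H_C b := by
    rw [Matrix.mul_one, Matrix.mul_assoc, hσx2, Matrix.mul_one]
  have hc2 : gibbs H_C b * σx * H_C * σx = -(gibbs H_C b * H_C) := by
    rw [Matrix.mul_assoc, Matrix.mul_assoc, hflip, Matrix.mul_neg]
  have hb2 : ((1 : Matrix A A ℂ) ⊗ₖ gibbs H_B b) * Uᴴ * (1 : Matrix (A × B) (A × B) ℂ) * U
      = (1 : Matrix A A ℂ) ⊗ₖ gibbs H_B b := by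
    rw [Matrix.mul_one, Matrix.mul_assoc, hU, Matrix.mul_one]
  have hT : ((1 : Matrix A A ℂ) ⊗ₖ gibbs H_BC b) * Vᴴ * ((1 : Matrix A A ℂ) ⊗ₖ H_BC) * V
      = Φ (X₀ ⊗ₖ gibbs H_C b)
        + Φ (((1 : Matrix A A ℂ) ⊗ₖ gibbs H_B b) ⊗ₖ (-(gibbs H_C b * H_C))) := by
    rw [parta, hHBC, hVH, hV', Matrix.kronecker_add]
    simp only [hassoc, Matrix.one_kronecker_one]
    rw [← _root_.map_add Φ]
    simp only [← _root_.map_mul Φ]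
    rw [Matrix.mul_add, Matrix.add_mul, _root_.map_add Φ]
    simp only [← Matrix.mul_kronecker_mul]
    rw [hc1, hc2, hb2]
  have hptr : ptraceB (((1 : Matrix A A ℂ) ⊗ₖ gibbs H_BC b) * Vᴴ
        * ((1 : Matrix A A ℂ) ⊗ₖ H_BC) * V)
      = ptraceB X₀ + (-t) • (1 : Matrix A A ℂ) := by
    rw [hT, ptraceB_add]
    simp only [hΦ, Matrix.reindexAlgEquiv_apply]
    rw [ptraceB_reindex_kron, ptraceB_reindex_kron, htrρC, one_smul, ptraceB_kron,
      Matrix.trace_neg, ← ht, htrρB, one_smul]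
  unfold hto
  rw [hptr, hEBC, htr, real_smul_mat (eqEnergy H_B b + r), real_smul_mat (eqEnergy H_B b)]
  have hs : (-(r : ℂ)) + (-(((eqEnergy H_B b + r : ℝ)) : ℂ))
      = (-(((eqEnergy H_B b : ℝ)) : ℂ)) + (((Δ * Real.tanh x : ℝ)) : ℂ) := by
    push_cast [hr]
    ring
  rw [sub_eq_add_neg, sub_eq_add_neg, ← neg_smul, ← neg_smul, add_assoc, add_assoc,
    ← add_smul, ← add_smul, hs]
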